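/- For all x ∈ ℝ^d, −1 ≤ w(x) ≤ 0. -/

import Mathlib

open MeasureTheory Filter
open scoped RealInnerProductSpace

/-- The Laplacian of `f : ℝ^d → ℝ`, as the sum of the second partial derivatives. -/
noncomputable def lap {d : ℕ} (f : EuclideanSpace ℝ (Fin d) → ℝ)
    (x : EuclideanSpace ℝ (Fin d)) : ℝ :=
  ∑ i : Fin d, fderiv ℝ (fun y => fderiv ℝ f y (EuclideanSpace.single i 1)) x
    (EuclideanSpace.single i 1)

/-- 1-D second derivative test at a local maximum. -/
lemma secondDeriv_nonpos_of_isLocalMax {φ φ' : ℝ → ℝ} {c : ℝ}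
    (hφ : ∀ t, HasDerivAt φ (φ' t) t) (hφ' : HasDerivAt φ' c 0)
    (hmax : IsLocalMax φ 0) : c ≤ 0 := by
  by_contra hc
  push_neg at hc
  have h0 : φ' 0 = 0 := hmax.hasDerivAt_eq_zero (hφ 0)
  have hs : Filter.Tendsto (slope φ' 0) (nhdsWithin 0 {(0:ℝ)}ᶜ) (nhds c) :=
    hasDerivAt_iff_tendsto_slope.mp hφ'
  have hev : ∀ᶠ t in nhdsWithin 0 {(0:ℝ)}ᶜ, c / 2 < slope φ' 0 t :=
    hs.eventually (eventually_gt_nhds (half_lt_self hc))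
  have hev2 : ∀ᶠ t in nhdsWithin (0:ℝ) (Set.Ioi 0), c / 2 < slope φ' 0 t :=
    hev.filter_mono (nhdsWithin_mono 0 (fun t ht => by
      simp only [Set.mem_compl_iff, Set.mem_singleton_iff]
      exact ne_of_gt ht))
  have hev3 : ∀ᶠ t in nhdsWithin (0:ℝ) (Set.Ioi 0), 0 < φ' t := by
    filter_upwards [hev2, self_mem_nhdsWithin] with t ht ht0
    rw [Set.mem_Ioi] at ht0
    rw [slope_def_field, h0, sub_zero, sub_zero] at ht
    have hpos : 0 < φ' t / t := lt_trans (by positivity) ht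
    exact (div_pos_iff.mp hpos).resolve_right
      (fun h => absurd ht0 (not_lt.mpr h.2.le)) |>.1
  rw [eventually_nhdsWithin_iff, Metric.eventually_nhds_iff] at hev3
  obtain ⟨δ, hδ, hδpos⟩ := hev3
  obtain ⟨δ₂, hδ₂, hmax'⟩ := Metric.eventually_nhds_iff.mp hmax
  set t0 : ℝ := min δ δ₂ / 2 with ht0def
  have ht0 : 0 < t0 := by positivity
  have hmono : StrictMonoOn φ (Set.Icc 0 t0) := by
    apply strictMonoOn_of_deriv_pos (convex_Icc 0 t0)
    · exact fun t _ => ((hφ t).continuousAt).continuousWithinAt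
    · intro t ht
      rw [interior_Icc, Set.mem_Ioo] at ht
      rw [(hφ t).deriv]
      apply hδpos
      · rw [Real.dist_eq, sub_zero, abs_of_pos ht.1]
        calc t < t0 := ht.2
        _ ≤ δ / 2 := by rw [ht0def]; gcongr; exact min_le_left _ _
        _ < δ := by linarith
      · exact ht.1
  have h1 : φ 0 < φ t0 := hmono (Set.left_mem_Icc.mpr ht0.le) (Set.right_mem_Icc.mpr ht0.le) ht0
  have h2 : φ t0 ≤ φ 0 := by
    apply hmax'
    rw [Real.dist_eq, sub_zero, abs_of_pos ht0]
    calc t0 ≤ δ₂ / 2 := by rw [ht0def]; gcongr; exact min_le_right _ _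
    _ < δ₂ := by linarith
  linarith

lemma diff_fderiv_apply {d : ℕ} {f : EuclideanSpace ℝ (Fin d) → ℝ}
    (hf : ContDiff ℝ 2 f) (e : EuclideanSpace ℝ (Fin d)) :
    Differentiable ℝ (fun z => fderiv ℝ f z e) := by
  have h1 : ContDiff ℝ 1 (fderiv ℝ f) := hf.fderiv_right (by norm_num)
  exact (ContinuousLinearMap.apply ℝ ℝ e).differentiable.comp (h1.differentiable (by norm_num))

/-- At a local max of a C² function, the Laplacian is nonpositive. -/
lemma lap_nonpos_of_isLocalMax {d : ℕ} {g : EuclideanSpace ℝ (Fin d) → ℝ}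
    (hg : ContDiff ℝ 2 g) {y : EuclideanSpace ℝ (Fin d)} (h : IsLocalMax g y) :
    lap g y ≤ 0 := by
  apply Finset.sum_nonpos
  intro i _
  set e : EuclideanSpace ℝ (Fin d) := EuclideanSpace.single i (1:ℝ) with he
  have hgd : Differentiable ℝ g := hg.differentiable (by norm_num)
  have hline : ∀ t : ℝ, HasDerivAt (fun s : ℝ => y + s • e) e t := by
    intro t
    simpa using ((hasDerivAt_id t).smul_const e).const_add y
  have hφ : ∀ t, HasDerivAt (fun s => g (y + s • e)) (fderiv ℝ g (y + t • e) e) t := fun t =>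
    (hgd (y + t • e)).hasFDerivAt.comp_hasDerivAt t (hline t)
  have hF : Differentiable ℝ (fun z => fderiv ℝ g z e) := diff_fderiv_apply hg e
  have h00 : y + (0:ℝ) • e = y := by simp
  have hψ : HasDerivAt (fun t : ℝ => fderiv ℝ g (y + t • e) e)
      (fderiv ℝ (fun z => fderiv ℝ g z e) y e) 0 := by
    have h' := (hF (y + (0:ℝ) • e)).hasFDerivAt.comp_hasDerivAt 0 (hline 0)
    rwa [h00] at h'
  have hmaxφ : IsLocalMax (fun s : ℝ => g (y + s • e)) 0 := by
    have hc : Filter.Tendsto (fun s : ℝ => y + s • e) (nhds 0) (nhds y) := by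
      have h' := (hline 0).continuousAt.tendsto
      rwa [h00] at h'
    have h'' := hc.eventually h
    simpa [IsLocalMax, IsMaxFilter, h00] using h''
  exact secondDeriv_nonpos_of_isLocalMax hφ hψ hmaxφ

lemma lap_neg {d : ℕ} (f : EuclideanSpace ℝ (Fin d) → ℝ) (x : EuclideanSpace ℝ (Fin d)) :
    lap (fun z => -f z) x = - lap f x := by
  unfold lap
  rw [← Finset.sum_neg_distrib]
  refine Finset.sum_congr rfl fun i _ => ?_
  have h1 : (fun y => fderiv ℝ (fun z => -f z) y (EuclideanSpace.single i 1))
      = fun y => -(fderiv ℝ f y (EuclideanSpace.single i 1)) := by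
    funext z
    rw [fderiv_fun_neg]
    simp
  rw [h1, fderiv_fun_neg]
  simp

lemma fderiv_inner_self {d : ℕ} (z v : EuclideanSpace ℝ (Fin d)) :
    fderiv ℝ (fun t : EuclideanSpace ℝ (Fin d) => ⟪t, t⟫) z v = 2 * ⟪z, v⟫ := by
  rw [fderiv_inner_apply ℝ differentiableAt_fun_id differentiableAt_fun_id v]
  simp only [fderiv_fun_id, ContinuousLinearMap.coe_id', id_eq]
  rw [real_inner_comm v z]; ring

lemma lap_add_inner {d : ℕ} {f : EuclideanSpace ℝ (Fin d) → ℝ}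
    (hf : ContDiff ℝ 2 f) (ε : ℝ) (y : EuclideanSpace ℝ (Fin d)) :
    lap (fun z => f z + ε * ⟪z, z⟫) y = lap f y + ε * (2 * d) := by
  have hfd : Differentiable ℝ f := hf.differentiable (by norm_num)
  have hqd : Differentiable ℝ (fun z : EuclideanSpace ℝ (Fin d) => ⟪z, z⟫) :=
    differentiable_fun_id.inner ℝ differentiable_fun_id
  unfold lap
  have hterm : ∀ i : Fin d,
      fderiv ℝ (fun z => fderiv ℝ (fun z' => f z' + ε * ⟪z', z'⟫) z (EuclideanSpace.single i 1)) y
        (EuclideanSpace.single i 1)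
      = fderiv ℝ (fun z => fderiv ℝ f z (EuclideanSpace.single i 1)) y
        (EuclideanSpace.single i 1) + ε * 2 := by
    intro i
    set e : EuclideanSpace ℝ (Fin d) := EuclideanSpace.single i (1:ℝ) with he
    have hA : (fun z => fderiv ℝ (fun z' => f z' + ε * ⟪z', z'⟫) z e)
        = fun z => fderiv ℝ f z e + ε * (2 * ⟪z, e⟫) := by
      funext z
      rw [fderiv_fun_add (hfd z) ((hqd z).const_mul ε)]
      rw [ContinuousLinearMap.add_apply, fderiv_const_mul (hqd z) ε]
      rw [ContinuousLinearMap.smul_apply, fderiv_inner_self]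
      simp [smul_eq_mul]
    rw [hA]
    have hd1 : DifferentiableAt ℝ (fun z => fderiv ℝ f z e) y := diff_fderiv_apply hf e y
    have hd2 : DifferentiableAt ℝ (fun z : EuclideanSpace ℝ (Fin d) => ε * (2 * ⟪z, e⟫)) y :=
      (((differentiableAt_fun_id.inner ℝ (differentiableAt_const e))).const_mul 2).const_mul ε
    rw [fderiv_fun_add hd1 hd2, ContinuousLinearMap.add_apply]
    congr 1
    have hd3 : DifferentiableAt ℝ (fun z : EuclideanSpace ℝ (Fin d) => ⟪z, e⟫) y :=
      differentiableAt_fun_id.inner ℝ (differentiableAt_const e)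
    rw [fderiv_const_mul ((hd3).const_mul 2) ε, ContinuousLinearMap.smul_apply,
      fderiv_const_mul hd3 2, ContinuousLinearMap.smul_apply,
      fderiv_inner_apply ℝ differentiableAt_fun_id (differentiableAt_const e) e]
    have hee : ⟪e, e⟫ = (1:ℝ) := by
      rw [real_inner_self_eq_norm_sq, he, EuclideanSpace.norm_single]
      norm_num
    have hne : ‖e‖ = 1 := by rw [he, EuclideanSpace.norm_single]; norm_num
    simp [fderiv_fun_id, fderiv_fun_const, smul_eq_mul, hee, hne]
  rw [Finset.sum_congr rfl (fun i _ => hterm i), Finset.sum_add_distrib]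
  simp [Finset.card_univ, mul_comm]
  ring

/-- The maximum principle on `ℝ^d`. -/
lemma maxPrinciple {d : ℕ} (hd : 0 < d) {f : EuclideanSpace ℝ (Fin d) → ℝ}
    (hf : ContDiff ℝ 2 f) {b R : ℝ}
    (hb : ∀ x, R ≤ ‖x‖ → f x ≤ b)
    (hlap : ∀ x, b < f x → 0 ≤ lap f x) :
    ∀ x, f x ≤ b := by
  intro x
  set R' : ℝ := max R ‖x‖ + 1 with hR'def
  have hR'pos : 0 < R' := by
    have : (0:ℝ) ≤ max R ‖x‖ := le_trans (norm_nonneg x) (le_max_right _ _)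
    linarith
  have key : ∀ ε : ℝ, 0 < ε → f x ≤ b + ε * R' ^ 2 := by
    intro ε hε
    have hqc : ContDiff ℝ 2 (fun z : EuclideanSpace ℝ (Fin d) => ⟪z, z⟫) :=
      contDiff_id.inner ℝ contDiff_id
    have hgc : ContDiff ℝ 2 (fun z : EuclideanSpace ℝ (Fin d) => f z + ε * ⟪z, z⟫) :=
      hf.add (contDiff_const.mul hqc)
    obtain ⟨y, hyB, hymax⟩ :=
      (isCompact_closedBall (0:EuclideanSpace ℝ (Fin d)) R').exists_isMaxOn
      ⟨0, by simp [hR'pos.le]⟩ hgc.continuous.continuousOn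
    have hfy : f y ≤ b := by
      by_contra hfyb
      push_neg at hfyb
      have hyR : ‖y‖ < R := by
        by_contra hh
        push_neg at hh
        exact absurd (hb y hh) (not_le.mpr hfyb)
      have hynb : Metric.closedBall (0:EuclideanSpace ℝ (Fin d)) R' ∈ nhds y := by
        apply Metric.closedBall_mem_nhds_of_mem
        rw [mem_ball_zero_iff]
        calc ‖y‖ < R := hyR
        _ ≤ max R ‖x‖ := le_max_left _ _
        _ < R' := by rw [hR'def]; linarith
      have hlm : IsLocalMax (fun z : EuclideanSpace ℝ (Fin d) => f z + ε * ⟪z, z⟫) y :=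
        hymax.isLocalMax hynb
      have h1 : lap (fun z : EuclideanSpace ℝ (Fin d) => f z + ε * ⟪z, z⟫) y ≤ 0 :=
        lap_nonpos_of_isLocalMax hgc hlm
      have h2 := lap_add_inner hf ε y
      have h3 : 0 ≤ lap f y := hlap y hfyb
      have hd' : (0:ℝ) < d := by exact_mod_cast hd
      nlinarith
    have hgxy : f x + ε * ⟪x, x⟫ ≤ f y + ε * ⟪y, y⟫ := hymax (by
      rw [Metric.mem_closedBall, dist_zero_right]
      calc ‖x‖ ≤ max R ‖x‖ := le_max_right _ _
      _ ≤ R' := by rw [hR'def]; linarith)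
    have hqx : (0:ℝ) ≤ ⟪x, x⟫ := real_inner_self_nonneg
    have hqy : ⟪y, y⟫ ≤ R' ^ 2 := by
      rw [real_inner_self_eq_norm_sq]
      have h4 : ‖y‖ ≤ R' := by rwa [Metric.mem_closedBall, dist_zero_right] at hyB
      have h5 := norm_nonneg y
      nlinarith
    nlinarith
  by_contra hcon
  push_neg at hcon
  have hR2 : (0:ℝ) < R' ^ 2 := by positivity
  have hk := key ((f x - b) / (2 * R' ^ 2)) (div_pos (by linarith) (by positivity))
  have heq : (f x - b) / (2 * R' ^ 2) * R' ^ 2 = (f x - b) / 2 := by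
    field_simp
  rw [heq] at hk
  linarith

theorem stmt6 (d : ℕ) (hd : 3 ≤ d) (V : EuclideanSpace ℝ (Fin d) → ℝ)
    (hV0 : ∀ x, 0 ≤ V x) (hVhold : ∃ (C r : NNReal), 0 < r ∧ HolderWith C r V)
    (hVsupp : HasCompactSupport V) (hVint : ∫ x, V x = 1)
    (a : ℝ) (ha : 0 < a)
    (w : EuclideanSpace ℝ (Fin d) → ℝ) (hw : ContDiff ℝ 2 w)
    (hweq : ∀ x, lap w x = a * V x * (1 + w x))
    (hwlim : Tendsto w (cocompact (EuclideanSpace ℝ (Fin d))) (nhds 0)) :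
    ∀ x, -1 ≤ w x ∧ w x ≤ 0 := by
  have hd0 : 0 < d := by omega
  -- from the limit, for every `c > 0` there is `R` with `|w z| ≤ c` outside the ball of radius `R`
  have hsmall : ∀ c : ℝ, 0 < c → ∃ R : ℝ, ∀ z, R ≤ ‖z‖ → |w z| ≤ c := by
    intro c hc
    have hmem := hwlim (Metric.ball_mem_nhds (0:ℝ) hc)
    rw [mem_map, mem_cocompact] at hmem
    obtain ⟨K, hK, hKsub⟩ := hmem
    obtain ⟨r, hr⟩ := hK.isBounded.subset_closedBall 0
    refine ⟨r + 1, fun z hz => ?_⟩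
    have hzK : z ∉ K := by
      intro hzk
      have := hr hzk
      rw [Metric.mem_closedBall, dist_zero_right] at this
      linarith
    have hball := hKsub hzK
    rw [Set.mem_preimage, Metric.mem_ball, Real.dist_eq, sub_zero] at hball
    exact le_of_lt hball
  have hub : ∀ z, w z ≤ 0 := by
    by_contra hcon
    push_neg at hcon
    obtain ⟨x0, hx0⟩ := hcon
    set b : ℝ := w x0 / 2 with hbdef
    have hb : 0 < b := by rw [hbdef]; linarith
    obtain ⟨R, hR⟩ := hsmall b hb
    have hfin := maxPrinciple hd0 hw
      (fun z hz => le_trans (le_abs_self _) (hR z hz))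
      (fun z hz => by
        rw [hweq z]
        have : (0:ℝ) ≤ 1 + w z := by linarith
        exact mul_nonneg (mul_nonneg ha.le (hV0 z)) this) x0
    rw [hbdef] at hfin
    linarith
  have hlb : ∀ z, -1 ≤ w z := by
    by_contra hcon
    push_neg at hcon
    obtain ⟨x0, hx0⟩ := hcon
    set b : ℝ := (1 + (-w x0)) / 2 with hbdef
    have hM : 1 < -w x0 := by linarith
    have hb1 : 1 < b := by rw [hbdef]; linarith
    obtain ⟨R, hR⟩ := hsmall 1 one_pos
    have hfin := maxPrinciple (b := b) (R := R) hd0 hw.neg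
      (fun z hz => by
        calc -w z ≤ |w z| := neg_le_abs (w z)
        _ ≤ 1 := hR z hz
        _ ≤ b := hb1.le)
      (fun z hz => by
        have hwz : w z < -b := by linarith
        have hwz1 : 1 + w z ≤ 0 := by linarith
        rw [lap_neg w z, hweq z]
        have : a * V z * (1 + w z) ≤ 0 :=
          mul_nonpos_of_nonneg_of_nonpos (mul_nonneg ha.le (hV0 z)) hwz1
        linarith) x0
    rw [hbdef] at hfin
    linarith
  exact fun x => ⟨hlb x, hub x⟩
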